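/- Let U₄ be the matrix on ℂ³ ⊗ ℂ³ obtained from the permutation matrix P₉ by multiplying four of its unit entries by arbitrary phases α₁, α₂, α₃, α₄ of modulus 1 (at positions corresponding to basis transitions 32↦12, 22↦31, 23↦13, and 31↦33 in the pattern of Eq. U₄). Then there exist diagonal unitary matrices Φ₁, Φ₂, Φ₃, Φ₄ of order 3 such that (Φ₁ ⊗ Φ₂) U₄ (Φ₃ ⊗ Φ₄) = P₉. In particular, every enphasing of P₉ of this form is locally unitarily equivalent to P₉. -/

import Mathlib

open Matrix

noncomputable def realign {d : ℕ} (U : Matrix (Fin d × Fin d) (Fin d × Fin d) ℂ) :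
    Matrix (Fin d × Fin d) (Fin d × Fin d) ℂ :=
  Matrix.of fun x y => U (x.1, y.1) (x.2, y.2)

noncomputable def ptrans {d : ℕ} (U : Matrix (Fin d × Fin d) (Fin d × Fin d) ℂ) :
    Matrix (Fin d × Fin d) (Fin d × Fin d) ℂ :=
  Matrix.of fun x y => U (x.1, y.2) (y.1, x.2)

def IsUnitary {n : Type*} [Fintype n] [DecidableEq n] (A : Matrix n n ℂ) : Prop :=
  A ∈ Matrix.unitaryGroup n ℂ

def Is2Unitary {d : ℕ} (U : Matrix (Fin d × Fin d) (Fin d × Fin d) ℂ) : Prop :=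
  IsUnitary U ∧ IsUnitary (realign U) ∧ IsUnitary (ptrans U)

/-- The image of `|j,β⟩` under the permutation taking
(11,12,13,21,22,23,31,32,33) to (11,23,32,33,12,21,22,31,13), 0-indexed. -/
def p9fun : Fin 3 → Fin 3 → Fin 3 × Fin 3 :=
  ![![(0, 0), (1, 2), (2, 1)],
    ![(2, 2), (0, 1), (1, 0)],
    ![(1, 1), (2, 0), (0, 2)]]

/-- The permutation matrix `P₉` on ℂ³ ⊗ ℂ³. -/
noncomputable def P₉ : Matrix (Fin 3 × Fin 3) (Fin 3 × Fin 3) ℂ :=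
  Matrix.of fun x y => if x = p9fun y.1 y.2 then 1 else 0


lemma abs_of_cube {β : ℂ} (h : ‖β ^ 3‖ = 1) : ‖β‖ = 1 := by
  rw [norm_pow] at h
  nlinarith [norm_nonneg β, sq_nonneg (‖β‖ - 1), sq_nonneg (‖β‖ + 1)]

lemma diag_unitary (d : Fin 3 → ℂ) (h : ∀ i, ‖d i‖ = 1) :
    (Matrix.diagonal d) ∈ Matrix.unitaryGroup (Fin 3) ℂ := by
  rw [Matrix.mem_unitaryGroup_iff]
  rw [Matrix.star_eq_conjTranspose, Matrix.diagonal_conjTranspose, Matrix.diagonal_mul_diagonal]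
  ext i j
  rcases eq_or_ne i j with rfl | hij
  · simp [Matrix.diagonal_apply_eq, Complex.mul_conj, ← Complex.sq_norm, h i]
  · simp [Matrix.diagonal_apply_ne _ hij, Matrix.one_apply_ne hij]

set_option maxHeartbeats 2000000 in
open Kronecker in
/-- The enphasing `U₄` of `P₉` with phases `α₁,α₂,α₃,α₄` (of modulus 1) placed on the
transitions 12↦23, 31↦22, 13↦32, 21↦33 is locally unitarily equivalent to `P₉` by
diagonal local unitaries. -/
theorem enphased_P9_LU_equivalent (α₁ α₂ α₃ α₄ : ℂ)
    (h₁ : ‖α₁‖ = 1) (h₂ : ‖α₂‖ = 1)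
    (h₃ : ‖α₃‖ = 1) (h₄ : ‖α₄‖ = 1)
    (U₄ : Matrix (Fin 3 × Fin 3) (Fin 3 × Fin 3) ℂ)
    (hU₄ : ∀ x y, U₄ x y =
      (if y = ((0 : Fin 3), (1 : Fin 3)) then α₁
        else if y = ((2 : Fin 3), (0 : Fin 3)) then α₂
        else if y = ((0 : Fin 3), (2 : Fin 3)) then α₃
        else if y = ((1 : Fin 3), (0 : Fin 3)) then α₄
        else 1) * P₉ x y) :
    ∃ Φ₁ Φ₂ Φ₃ Φ₄ : Matrix (Fin 3) (Fin 3) ℂ,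
      Φ₁.IsDiag ∧ Φ₂.IsDiag ∧ Φ₃.IsDiag ∧ Φ₄.IsDiag ∧
      IsUnitary Φ₁ ∧ IsUnitary Φ₂ ∧ IsUnitary Φ₃ ∧ IsUnitary Φ₄ ∧
      (Φ₁ ⊗ₖ Φ₂) * U₄ * (Φ₃ ⊗ₖ Φ₄) = P₉ := by
  set β₁ := α₁ ^ ((3:ℕ) : ℂ)⁻¹ with hβ₁def
  set β₂ := α₂ ^ ((3:ℕ) : ℂ)⁻¹ with hβ₂def
  set β₃ := α₃ ^ ((3:ℕ) : ℂ)⁻¹ with hβ₃def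
  set β₄ := α₄ ^ ((3:ℕ) : ℂ)⁻¹ with hβ₄def
  have hc₁ : β₁ ^ 3 = α₁ := Complex.cpow_nat_inv_pow α₁ (by norm_num)
  have hc₂ : β₂ ^ 3 = α₂ := Complex.cpow_nat_inv_pow α₂ (by norm_num)
  have hc₃ : β₃ ^ 3 = α₃ := Complex.cpow_nat_inv_pow α₃ (by norm_num)
  have hc₄ : β₄ ^ 3 = α₄ := Complex.cpow_nat_inv_pow α₄ (by norm_num)
  have ha₁ : ‖β₁‖ = 1 := abs_of_cube (by rw [hc₁]; exact h₁)
  have ha₂ : ‖β₂‖ = 1 := abs_of_cube (by rw [hc₂]; exact h₂)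
  have ha₃ : ‖β₃‖ = 1 := abs_of_cube (by rw [hc₃]; exact h₃)
  have ha₄ : ‖β₄‖ = 1 := abs_of_cube (by rw [hc₄]; exact h₄)
  have hn₁ : β₁ ≠ 0 := by intro h; rw [h] at ha₁; simp at ha₁
  have hn₂ : β₂ ≠ 0 := by intro h; rw [h] at ha₂; simp at ha₂
  have hn₃ : β₃ ≠ 0 := by intro h; rw [h] at ha₃; simp at ha₃
  have hn₄ : β₄ ≠ 0 := by intro h; rw [h] at ha₄; simp at ha₄
  set dA : Fin 3 → ℂ := ![1, (β₁ * β₂)⁻¹, (β₃ * β₄)⁻¹] with hdA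
  set dB : Fin 3 → ℂ := ![β₁ * β₄, β₁ * β₄ * (β₂ * β₃)⁻¹, 1] with hdB
  set dC : Fin 3 → ℂ := ![β₂ * (β₁ * β₃)⁻¹, β₂ * β₄⁻¹, 1] with hdC
  set dD : Fin 3 → ℂ := ![β₃ * (β₂ * β₄)⁻¹, β₃ * β₁⁻¹, 1] with hdD
  have habs : ∀ (u v : ℂ), ‖u‖ = 1 → ‖v‖ = 1 →
      ‖u * v‖ = 1 := by intro u v hu hv; rw [norm_mul, hu, hv, mul_one]
  have habsi : ∀ (u : ℂ), ‖u‖ = 1 → ‖u⁻¹‖ = 1 := by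
    intro u hu; rw [norm_inv, hu]; norm_num
  refine ⟨Matrix.diagonal dA, Matrix.diagonal dB, Matrix.diagonal dC, Matrix.diagonal dD,
    Matrix.isDiag_diagonal _, Matrix.isDiag_diagonal _, Matrix.isDiag_diagonal _,
    Matrix.isDiag_diagonal _, ?_, ?_, ?_, ?_, ?_⟩
  · exact diag_unitary _ (by
      intro i; fin_cases i <;>
        simp [hdA, _root_.map_mul, map_inv₀, ha₁, ha₂, ha₃, ha₄])
  · exact diag_unitary _ (by
      intro i; fin_cases i <;>
        simp [hdB, _root_.map_mul, map_inv₀, ha₁, ha₂, ha₃, ha₄])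
  · exact diag_unitary _ (by
      intro i; fin_cases i <;>
        simp [hdC, _root_.map_mul, map_inv₀, ha₁, ha₂, ha₃, ha₄])
  · exact diag_unitary _ (by
      intro i; fin_cases i <;>
        simp [hdD, _root_.map_mul, map_inv₀, ha₁, ha₂, ha₃, ha₄])
  · rw [Matrix.diagonal_kronecker_diagonal, Matrix.diagonal_kronecker_diagonal]
    ext ⟨x1, x2⟩ ⟨y1, y2⟩
    rw [Matrix.mul_diagonal, Matrix.diagonal_mul, hU₄]
    fin_cases x1 <;> fin_cases x2 <;> fin_cases y1 <;> fin_cases y2 <;>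
      simp [P₉, p9fun, hdA, hdB, hdC, hdD, Prod.ext_iff, Fin.ext_iff] <;>
      field_simp <;>
      (try simp only [← hc₁, ← hc₂, ← hc₃, ← hc₄]) <;> ring
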